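/- Suppose S is a finite spanning subset of X. Let Y be the free vector space over K on a set B = {b_s}_{s∈S} of symbols indexed by S, equipped with the alternating bilinear form ω_Y defined by ω_Y(b_s, b_t) = ω(s,t), let p : Y → X be the linear map with p(b_s) = s, and let p* : X* → Y* be the dual map p*(α) = α ∘ p. Then im p* is Tr(B)*-invariant, and p* induces a group isomorphism between Tr(S)* and the restriction of Tr(B)* to im p*. In particular, α, β ∈ X* belong to the same orbit of Tr(S)* if and only if p*(α) and p*(β) belong to the same orbit of Tr(B)*. -/

import Mathlib

/-- Symplectic transvections as permutations. -/
def transvectionSet {K X : Type*} [Field K] [AddCommGroup X] [Module K X]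
    (ω : X →ₗ[K] X →ₗ[K] K) (S : Set X) : Set (Equiv.Perm X) :=
  {f | ∃ s ∈ S, ∃ k : K, k ≠ 0 ∧ ∀ x, f x = x + (k * ω x s) • s}

/-- The transvection group `Tr(S)`. -/
def transvectionGroup {K X : Type*} [Field K] [AddCommGroup X] [Module K X]
    (ω : X →ₗ[K] X →ₗ[K] K) (S : Set X) : Subgroup (Equiv.Perm X) :=
  Subgroup.closure (transvectionSet ω S)

/-- The projection `p : Y → X` from the free vector space `Y = ⟨b_s : s ∈ S⟩`
to `X`, sending `b_s ↦ s`. -/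
noncomputable def projMap (K : Type*) {X : Type*} [Field K] [AddCommGroup X]
    [Module K X] (S : Set X) : (S →₀ K) →ₗ[K] X :=
  Finsupp.linearCombination K Subtype.val

/-- The alternating form `ω_Y` on the free vector space `Y`, defined by
`ω_Y(b_s, b_t) = ω(s, t)` (i.e. pulled back along `p`). -/
noncomputable def freeForm {K X : Type*} [Field K] [AddCommGroup X] [Module K X]
    (ω : X →ₗ[K] X →ₗ[K] K) (S : Set X) :
    (S →₀ K) →ₗ[K] (S →₀ K) →ₗ[K] K :=
  ω.compl₁₂ (projMap K S) (projMap K S)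

/-- The set `B = {b_s}_{s ∈ S}` of standard basis vectors of `Y`. -/
def freeBasisSet (K : Type*) {X : Type*} [Field K] [AddCommGroup X] [Module K X]
    (S : Set X) : Set (S →₀ K) :=
  Set.range fun s : S => Finsupp.single s 1


theorem Equiv.Perm.apply_inv_self {α : Type*} (f : Equiv.Perm α) (x : α) :
    f (f⁻¹ x) = x :=
  f.apply_symm_apply x

def tvEquiv {K X : Type*} [Field K] [AddCommGroup X] [Module K X]
    (ω : X →ₗ[K] X →ₗ[K] K) (halt : ∀ x, ω x x = 0) (s : X) (k : K) :
    Equiv.Perm X where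
  toFun x := x + (k * ω x s) • s
  invFun x := x + (-k * ω x s) • s
  left_inv x := by
    have h : ω (x + (k * ω x s) • s) s = ω x s := by
      simp [map_add, map_smul, halt]
    simp only [h]
    module
  right_inv x := by
    have h : ω (x + (-k * ω x s) • s) s = ω x s := by
      simp [map_add, map_smul, halt]
    simp only [h]
    module

-- Every element of a transvection group agrees pointwise with a linear map.
theorem exists_linear {K X : Type*} [Field K] [AddCommGroup X] [Module K X]
    (ω : X →ₗ[K] X →ₗ[K] K) (S : Set X) :
    ∀ g ∈ transvectionGroup ω S, ∃ L : X →ₗ[K] X, ∀ x, g x = L x := by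
  intro g hg
  induction hg using Subgroup.closure_induction with
  | mem f hf =>
    obtain ⟨s, _, k, _, hf⟩ := hf
    exact ⟨LinearMap.id + ((LinearMap.flip ω) s).smulRight (k • s), fun x => by
      simp [hf x, mul_smul, smul_comm k]⟩
  | one => exact ⟨LinearMap.id, fun x => rfl⟩
  | mul a b _ _ ha hb =>
    obtain ⟨L, hL⟩ := ha
    obtain ⟨M, hM⟩ := hb
    exact ⟨L.comp M, fun x => by simp [Equiv.Perm.mul_apply, hM, hL]⟩
  | inv a _ ha =>
    obtain ⟨L, hL⟩ := ha
    have hbij : Function.Bijective L := by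
      constructor
      · intro u v huv
        exact a.injective (by rw [hL, hL, huv])
      · intro y
        exact ⟨a.symm y, by rw [← hL, Equiv.apply_symm_apply]⟩
    refine ⟨(LinearEquiv.ofBijective L hbij).symm.toLinearMap, fun x => ?_⟩
    apply a.injective
    rw [Equiv.Perm.apply_inv_self, hL]
    exact ((LinearEquiv.ofBijective L hbij).apply_symm_apply x).symm

/-- for a finite spanning set `S ⊆ X`, with `Y` the free vector
space on `B = {b_s}`, `ω_Y(b_s,b_t) = ω(s,t)`, `p : Y → X` with `p(b_s) = s`
and dual map `p* : X* → Y*`: the image of `p*` is `Tr(B)*`-invariant, `p*` is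
injective and intertwines `Tr(S)*` with the restriction of `Tr(B)*` to
`im p*` (inducing a group isomorphism); in particular `α, β ∈ X*` are in the
same `Tr(S)*`-orbit iff `p*(α)`, `p*(β)` are in the same `Tr(B)*`-orbit. -/
theorem stmt4 {K X : Type*} [Field K] [AddCommGroup X] [Module K X]
    [FiniteDimensional K X]
    (ω : X →ₗ[K] X →ₗ[K] K) (halt : ∀ x, ω x x = 0)
    (S : Set X) (hfin : S.Finite) (hspan : Submodule.span K S = ⊤) :
    -- `im p*` is `Tr(B)*`-invariant
    (∀ g ∈ transvectionGroup (freeForm ω S) (freeBasisSet K S),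
      ∀ α : Module.Dual K X, ∃ α' : Module.Dual K X,
        ∀ y : S →₀ K, (projMap K S).dualMap α (g y) = (projMap K S).dualMap α' y) ∧
    -- `p*` is injective
    Function.Injective ((projMap K S).dualMap (R := K)) ∧
    -- `p*` intertwines the dual actions in both directions
    (∀ g ∈ transvectionGroup ω S,
      ∃ h ∈ transvectionGroup (freeForm ω S) (freeBasisSet K S),
        ∀ α : Module.Dual K X, ∀ y : S →₀ K,
          α (g (projMap K S y)) = α (projMap K S (h y))) ∧
    (∀ h ∈ transvectionGroup (freeForm ω S) (freeBasisSet K S),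
      ∃ g ∈ transvectionGroup ω S,
        ∀ α : Module.Dual K X, ∀ y : S →₀ K,
          α (g (projMap K S y)) = α (projMap K S (h y))) ∧
    -- in particular: the orbit criterion
    (∀ α β : Module.Dual K X,
      (∃ g ∈ transvectionGroup ω S, ∀ x, β x = α (g x)) ↔
        (∃ h ∈ transvectionGroup (freeForm ω S) (freeBasisSet K S),
          ∀ y : S →₀ K,
            (projMap K S).dualMap β y = (projMap K S).dualMap α (h y))) := by
  set p := projMap K S with hp
  have hpb : ∀ s : S, p (Finsupp.single s 1) = s.val := fun s => by
    simp [hp, projMap]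
  have hform : ∀ y z : S →₀ K, freeForm ω S y z = ω (p y) (p z) := fun _ _ => rfl
  have haltY : ∀ y : S →₀ K, freeForm ω S y y = 0 := fun y => halt (p y)
  have hpsurj : Function.Surjective p := by
    rw [← LinearMap.range_eq_top, hp, projMap, Finsupp.range_linearCombination]
    simpa using hspan
  -- direction A: from Tr(B) to Tr(S)
  have hA : ∀ h ∈ transvectionGroup (freeForm ω S) (freeBasisSet K S),
      ∃ g ∈ transvectionGroup ω S, ∀ y, p (h y) = g (p y) := by
    intro h hh
    induction hh using Subgroup.closure_induction with
    | mem f hf =>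
      obtain ⟨b, hb, k, hk, hf⟩ := hf
      obtain ⟨s, rfl⟩ := hb
      refine ⟨tvEquiv ω halt s.val k,
        Subgroup.subset_closure ⟨s.val, s.2, k, hk, fun x => rfl⟩, fun y => ?_⟩
      have : (tvEquiv ω halt s.val k) (p y) = p y + (k * ω (p y) s.val) • s.val := rfl
      rw [this, hf y, map_add, map_smul, hform, hpb]
    | one => exact ⟨1, one_mem _, fun y => rfl⟩
    | mul a b _ _ ha hb =>
      obtain ⟨g₁, hg₁, h₁⟩ := ha
      obtain ⟨g₂, hg₂, h₂⟩ := hb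
      exact ⟨g₁ * g₂, mul_mem hg₁ hg₂, fun y => by
        simp [Equiv.Perm.mul_apply, h₂, h₁]⟩
    | inv a _ ha =>
      obtain ⟨g, hg, hpg⟩ := ha
      refine ⟨g⁻¹, inv_mem hg, fun y => ?_⟩
      apply g.injective
      rw [Equiv.Perm.apply_inv_self, ← hpg, Equiv.Perm.apply_inv_self]
  -- direction B: from Tr(S) to Tr(B)
  have hB : ∀ g ∈ transvectionGroup ω S,
      ∃ h ∈ transvectionGroup (freeForm ω S) (freeBasisSet K S),
        ∀ y, g (p y) = p (h y) := by
    intro g hg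
    induction hg using Subgroup.closure_induction with
    | mem f hf =>
      obtain ⟨s, hs, k, hk, hf⟩ := hf
      refine ⟨tvEquiv (freeForm ω S) haltY (Finsupp.single ⟨s, hs⟩ 1) k,
        Subgroup.subset_closure ⟨Finsupp.single ⟨s, hs⟩ 1, ⟨⟨s, hs⟩, rfl⟩, k, hk,
          fun y => rfl⟩, fun y => ?_⟩
      have h1 : (tvEquiv (freeForm ω S) haltY (Finsupp.single ⟨s, hs⟩ 1) k) y
          = y + (k * freeForm ω S y (Finsupp.single ⟨s, hs⟩ 1)) • Finsupp.single ⟨s, hs⟩ 1 :=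
        rfl
      rw [hf (p y), h1, map_add, map_smul, hform, hpb]
  -- direction A: from Tr(S) to Tr(B)
    | one => exact ⟨1, one_mem _, fun y => rfl⟩
    | mul a b _ _ ha hb =>
      obtain ⟨h₁, hh₁, e₁⟩ := ha
      obtain ⟨h₂, hh₂, e₂⟩ := hb
      exact ⟨h₁ * h₂, mul_mem hh₁ hh₂, fun y => by
        simp [Equiv.Perm.mul_apply, e₂, e₁]⟩
    | inv a _ ha =>
      obtain ⟨h, hh, e⟩ := ha
      refine ⟨h⁻¹, inv_mem hh, fun y => ?_⟩
      apply a.injective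
      rw [Equiv.Perm.apply_inv_self, e, Equiv.Perm.apply_inv_self]
  refine ⟨?_, ?_, ?_, ?_, ?_⟩
  · -- invariance of im p*
    intro g hg α
    obtain ⟨g', hg', hgg'⟩ := hA g hg
    obtain ⟨L, hL⟩ := exists_linear ω S g' hg'
    refine ⟨α.comp L, fun y => ?_⟩
    simp only [LinearMap.dualMap_apply, LinearMap.coe_comp, Function.comp_apply]
    rw [hgg', hL]
  · -- injectivity of p*
    intro α β hab
    ext x
    obtain ⟨y, rfl⟩ := hpsurj x
    exact DFunLike.congr_fun hab y
  · intro g hg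
    obtain ⟨h, hh, e⟩ := hB g hg
    exact ⟨h, hh, fun α y => by rw [e]⟩
  · intro h hh
    obtain ⟨g, hg, e⟩ := hA h hh
    exact ⟨g, hg, fun α y => by rw [e]⟩
  · intro α β
    constructor
    · rintro ⟨g, hg, hβ⟩
      obtain ⟨h, hh, e⟩ := hB g hg
      exact ⟨h, hh, fun y => by
        simp only [LinearMap.dualMap_apply]
        rw [hβ, e]⟩
    · rintro ⟨h, hh, e⟩
      obtain ⟨g, hg, e'⟩ := hA h hh
      refine ⟨g, hg, fun x => ?_⟩
      obtain ⟨y, rfl⟩ := hpsurj x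
      have := e y
      simp only [LinearMap.dualMap_apply] at this
      rw [this, e']
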